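/- Let μ be an ultrafilter on a set S, (ν_s)_{s∈S} a family of ultrafilters on a set T, and (M_t)_{t∈T} a family of nonempty complete metric spaces bounded by k. Then the map Δ from the metric ultraproduct ∫_T M_t d(∫_S ν_s dμ) to ∫_S (∫_T M_t dν_s) dμ sending the class of (b_t)_{t∈T} to the class of the constant family ((b_t)_{t∈T})_{s∈S} (where in the s-component the class is taken with respect to ν_s) is well defined and 1-Lipschitz. -/
import Mathlib


/-- The categorical Fubini transform for metric ultraproducts: for an ultrafilter `μ` on
`S`, a family of ultrafilters `ν s` on `T`, and nonempty metric spaces `M t` of diameter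
`≤ k`, the map sending the class of `(b_t)` in `∫_T M_t d(∫_S ν_s dμ)` to the class of the
constant family `((b_t))_{s∈S}` in `∫_S (∫_T M_t dν_s) dμ` is well defined (independent of
the representative) and `1`-Lipschitz.  Here `D lam` is the ultralimit distance along the
ultrafilter `lam`. -/
theorem stmt_12 {S T : Type*} (μ : Ultrafilter S) (ν : S → Ultrafilter T)
    (M : T → Type*) [∀ t, MetricSpace (M t)] [∀ t, Nonempty (M t)] (k : ℝ)
    (hk : ∀ (t : T) (x y : M t), dist x y ≤ k)
    (D : Ultrafilter T → (∀ t, M t) → (∀ t, M t) → ℝ)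
    (hD : D = fun lam f g => ⨅ U : {U : Set T // U ∈ lam}, ⨆ t : U.1, dist (f t.1) (g t.1)) :
    (∀ f g : ∀ t, M t,
      (∀ ε > 0, {t | dist (f t) (g t) < ε} ∈ Ultrafilter.bind μ ν) →
      (∀ ε > 0, {s | D (ν s) f g < ε} ∈ μ)) ∧
    (∀ f g : ∀ t, M t,
      (⨅ U : {U : Set S // U ∈ μ}, ⨆ s : U.1, D (ν s.1) f g) ≤ D (Ultrafilter.bind μ ν) f g) := by
  subst hD
  have hS : Nonempty S := Filter.nonempty_of_neBot μ
  have hT : Nonempty T := Filter.nonempty_of_neBot (ν (Classical.arbitrary S))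
  have hk0 : 0 ≤ k := by
    obtain ⟨t⟩ := hT
    have := hk t (Classical.arbitrary _) (Classical.arbitrary _)
    exact le_trans dist_nonneg this
  -- sup over any subtype is ≤ k
  have hsupk : ∀ (f g : ∀ t, M t) (U : Set T),
      (⨆ t : U, dist (f t.1) (g t.1)) ≤ k :=
    fun f g U => Real.iSup_le (fun t => hk _ _ _) hk0
  have hbddA : ∀ (f g : ∀ t, M t) (U : Set T),
      BddAbove (Set.range fun t : U => dist (f t.1) (g t.1)) :=
    fun f g U => ⟨k, by rintro x ⟨t, rfl⟩; exact hk _ _ _⟩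
  -- sup over nonempty subtype is ≥ 0
  have hsup0 : ∀ (f g : ∀ t, M t) (U : Set T), U.Nonempty →
      0 ≤ ⨆ t : U, dist (f t.1) (g t.1) := by
    rintro f g U ⟨t, ht⟩
    exact le_trans dist_nonneg (le_ciSup (hbddA f g U) ⟨t, ht⟩)
  -- bddBelow for the infimum defining D
  have hbddB : ∀ (f g : ∀ t, M t) (lam : Ultrafilter T),
      BddBelow (Set.range fun U : {U : Set T // U ∈ lam} =>
        ⨆ t : U.1, dist (f t.1) (g t.1)) := by
    intro f g lam
    refine ⟨0, ?_⟩
    rintro x ⟨U, rfl⟩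
    exact hsup0 f g U.1 (Filter.nonempty_of_mem U.2)
  haveI : ∀ (lam : Ultrafilter T), Nonempty {U : Set T // U ∈ lam} :=
    fun lam => ⟨⟨Set.univ, Filter.univ_mem⟩⟩
  haveI : Nonempty {U : Set S // U ∈ μ} := ⟨⟨Set.univ, Filter.univ_mem⟩⟩
  haveI : Nonempty {U : Set T // U ∈ Ultrafilter.bind μ ν} := ⟨⟨Set.univ, Filter.univ_mem⟩⟩
  have hD0 : ∀ (f g : ∀ t, M t) (lam : Ultrafilter T),
      0 ≤ ⨅ U : {U : Set T // U ∈ lam}, ⨆ t : U.1, dist (f t.1) (g t.1) :=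
    fun f g lam => le_ciInf fun U => hsup0 f g U.1 (Filter.nonempty_of_mem U.2)
  constructor
  · intro f g h ε hε
    have h2 : {s | {t | dist (f t) (g t) < ε / 2} ∈ ν s} ∈ μ :=
      Filter.mem_bind'.mp (h (ε / 2) (half_pos hε))
    filter_upwards [h2] with s hs
    have hle : (⨅ U : {U : Set T // U ∈ ν s}, ⨆ t : U.1, dist (f t.1) (g t.1)) ≤ ε / 2 :=
      ciInf_le_of_le (hbddB f g (ν s)) ⟨_, hs⟩
        (Real.iSup_le (fun t => le_of_lt t.2) (le_of_lt (half_pos hε)))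
    exact lt_of_le_of_lt hle (half_lt_self hε)
  · intro f g
    refine le_ciInf fun V => ?_
    have hU : {s | V.1 ∈ ν s} ∈ μ := Filter.mem_bind'.mp V.2
    refine ciInf_le_of_le ?_ ⟨_, hU⟩ ?_
    · refine ⟨0, ?_⟩
      rintro x ⟨U, rfl⟩
      exact Real.iSup_nonneg fun s => hD0 f g (ν s.1)
    · refine Real.iSup_le (fun s => ?_) (hsup0 f g V.1 (Filter.nonempty_of_mem V.2))
      exact ciInf_le (hbddB f g (ν s.1)) ⟨V.1, s.2⟩
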